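/- Suppose t := a10^10 − a10^00 = a11^11 − a11^01. Then the multiset of eigenvalues of Q_N^{(g)} is {t^k with multiplicity 2·C(N−1, k) : k = 0, 1, …, N−1}; equivalently, the characteristic polynomial of Q_N^{(g)} is ∏_{k=0}^{N-1} (λ − t^k)^{2 binom(N-1,k)}. -/
import Mathlib


open Matrix Kronecker

/-- Configuration space of `N` sites, each holding a state in `{0,1}`. -/
abbrev Conf (N : ℕ) := Fin N → Fin 2

/-- `Fin 2 × Conf N ≃ Conf (N+1)` by prepending the first bit. -/
def confEquiv (N : ℕ) : Fin 2 × Conf N ≃ Conf (N + 1) :=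
  Fin.consEquiv (fun _ => Fin 2)

/-- `(Fin 2 × Fin 2) × Conf N ≃ Conf (N+2)` by prepending the first two bits. -/
def confEquiv2 (N : ℕ) : (Fin 2 × Fin 2) × Conf N ≃ Conf (N + 2) :=
  (((Equiv.prodAssoc (Fin 2) (Fin 2) (Conf N)).trans
    ((Equiv.refl (Fin 2)).prodCongr (confEquiv N))).trans (confEquiv (N + 1)))

/-- The global operator `Q_N^{(g)}`, defined by `Q_1 = I_2` and
`Q_{N+1} = (I_2 ⊗ Q_N) (Q^{(l)} ⊗ I_{2^{N-1}})`. -/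
def Qg {R : Type*} [CommRing R] (Ql : Matrix (Fin 2 × Fin 2) (Fin 2 × Fin 2) R) :
    (N : ℕ) → Matrix (Conf N) (Conf N) R
  | 0 => 1
  | 1 => 1
  | (N + 2) =>
      (Matrix.reindex (confEquiv (N + 1)) (confEquiv (N + 1))
          ((1 : Matrix (Fin 2) (Fin 2) R) ⊗ₖ Qg Ql (N + 1))) *
      (Matrix.reindex (confEquiv2 N) (confEquiv2 N)
          (Ql ⊗ₖ (1 : Matrix (Conf N) (Conf N) R)))

/-- Top-left block `E`. -/
def blockTL {R : Type*} [CommRing R] {N : ℕ}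
    (M : Matrix (Conf (N + 1)) (Conf (N + 1)) R) : Matrix (Conf N) (Conf N) R :=
  Matrix.of fun x y => M (Fin.cons 0 x) (Fin.cons 0 y)

/-- Top-right block `F`. -/
def blockTR {R : Type*} [CommRing R] {N : ℕ}
    (M : Matrix (Conf (N + 1)) (Conf (N + 1)) R) : Matrix (Conf N) (Conf N) R :=
  Matrix.of fun x y => M (Fin.cons 0 x) (Fin.cons 1 y)

/-- Bottom-left block `G`. -/
def blockBL {R : Type*} [CommRing R] {N : ℕ}
    (M : Matrix (Conf (N + 1)) (Conf (N + 1)) R) : Matrix (Conf N) (Conf N) R :=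
  Matrix.of fun x y => M (Fin.cons 1 x) (Fin.cons 0 y)

/-- Bottom-right block `H`. -/
def blockBR {R : Type*} [CommRing R] {N : ℕ}
    (M : Matrix (Conf (N + 1)) (Conf (N + 1)) R) : Matrix (Conf N) (Conf N) R :=
  Matrix.of fun x y => M (Fin.cons 1 x) (Fin.cons 1 y)


lemma confEquiv_symm_apply (N : ℕ) (x : Conf (N+1)) :
    (confEquiv N).symm x = (x 0, Fin.tail x) := rfl

lemma confEquiv_apply (N : ℕ) (a : Fin 2) (w : Conf N) :
    confEquiv N (a, w) = Fin.cons a w := rfl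

lemma confEquiv2_symm_apply (N : ℕ) (m : Conf (N + 2)) :
    (confEquiv2 N).symm m = ((m 0, Fin.tail m 0), Fin.tail (Fin.tail m)) := rfl

lemma Qg_apply (Ql : Matrix (Fin 2 × Fin 2) (Fin 2 × Fin 2) ℂ)
    (hvan : ∀ i j k l : Fin 2, j ≠ l → Ql (k, l) (i, j) = 0) (N : ℕ)
    (x y : Conf (N + 2)) :
    Qg Ql (N + 2) x y =
      Ql (x 0, Fin.tail y 0) (y 0, Fin.tail y 0) * Qg Ql (N + 1) (Fin.tail x) (Fin.tail y) := by
  rw [Qg]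
  rw [Matrix.mul_apply]
  rw [← Equiv.sum_comp (confEquiv (N + 1))]
  rw [Fintype.sum_prod_type]
  simp only [Matrix.reindex_apply, Matrix.submatrix_apply, confEquiv_symm_apply,
    Fin.tail_cons, Fin.cons_zero, Matrix.kroneckerMap_apply, Matrix.one_apply]
  simp only [confEquiv_apply, confEquiv2_symm_apply, Fin.cons_zero, Fin.tail_cons,
    ite_mul, one_mul, zero_mul, mul_ite, mul_one, mul_zero]
  have hsum : ∀ f : Conf (N+1) → ℂ, ∑ w : Conf (N+1), f w = ∑ p : Fin 2 × Conf N, f (Fin.cons p.1 p.2) := by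
    intro f; rw [← Equiv.sum_comp (confEquiv N) f]; rfl
  conv_lhs => enter [2, a]; rw [hsum]
  simp only [Fintype.sum_prod_type, Fin.tail_cons, Fin.cons_zero,
    Finset.sum_ite_eq, Finset.sum_ite_eq', Finset.mem_univ, if_true]
  rw [Finset.sum_comm]
  simp only [Finset.sum_ite_eq, Finset.mem_univ, if_true]
  have h2 : ∀ v : Fin 2, v = 0 ∨ v = 1 := by decide
  rcases h2 (Fin.tail y 0) with h | h <;> rw [h, Fin.sum_univ_two] <;>
    [rw [hvan (y 0) 0 (x 0) 1 (by decide)]; rw [hvan (y 0) 1 (x 0) 0 (by decide)]] <;>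
    rw [← h, Fin.cons_self_tail] <;> ring

def splitEquiv (N : ℕ) : Conf (N + 1) ≃ Conf N ⊕ Conf N :=
  (confEquiv N).symm.trans ((finTwoEquiv.prodCongr (Equiv.refl (Conf N))).trans
    (Equiv.boolProdEquivSum (Conf N)))

lemma splitEquiv_apply_zero (N : ℕ) (x : Conf (N + 1)) (h : x 0 = 0) :
    splitEquiv N x = Sum.inl (Fin.tail x) := by
  simp [splitEquiv, confEquiv_symm_apply, finTwoEquiv, h]

lemma splitEquiv_apply_one (N : ℕ) (x : Conf (N + 1)) (h : x 0 = 1) :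
    splitEquiv N x = Sum.inr (Fin.tail x) := by
  simp [splitEquiv, confEquiv_symm_apply, finTwoEquiv, h]

lemma pascal_prod (f : ℕ → ℂ) (N : ℕ) :
    ∏ k ∈ Finset.range (N + 2), f k ^ (2 * Nat.choose (N + 1) k) =
      (∏ k ∈ Finset.range (N + 1), f (k + 1) ^ (2 * Nat.choose N k)) *
        ∏ k ∈ Finset.range (N + 1), f k ^ (2 * Nat.choose N k) := by
  rw [Finset.prod_range_succ' (fun k => f k ^ (2 * Nat.choose (N + 1) k))]
  simp only [Nat.choose_succ_succ, Nat.choose_zero_right, Nat.mul_add, pow_add]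
  rw [Finset.prod_mul_distrib]
  have h : (∏ k ∈ Finset.range (N + 1), f (k + 1) ^ (2 * Nat.choose N (k + 1))) *
      f 0 ^ (2 * Nat.choose N 0) = ∏ k ∈ Finset.range (N + 1), f k ^ (2 * Nat.choose N k) := by
    rw [← Finset.prod_range_succ' (fun k => f k ^ (2 * Nat.choose N k)) (N + 1),
      Finset.prod_range_succ, Nat.choose_succ_self, Nat.mul_zero, pow_zero, mul_one]
  rw [mul_assoc, ← h]
  simp [Nat.choose_zero_right]

lemma fromBlocks_sub {α : Type*} [Fintype α] [DecidableEq α]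
    (A B C D A' B' C' D' : Matrix α α ℂ) :
    Matrix.fromBlocks A B C D - Matrix.fromBlocks A' B' C' D' =
      Matrix.fromBlocks (A - A') (B - B') (C - C') (D - D') := by
  rw [sub_eq_add_neg, Matrix.fromBlocks_neg, Matrix.fromBlocks_add]
  congr 1 <;> abel

lemma aux_det (Ql : Matrix (Fin 2 × Fin 2) (Fin 2 × Fin 2) ℂ)
    (hvan : ∀ i j k l : Fin 2, j ≠ l → Ql (k, l) (i, j) = 0)
    (hstoch : ∀ i j : Fin 2, Ql (0, j) (i, j) + Ql (1, j) (i, j) = 1) (t : ℂ)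
    (ht₁ : t = Ql (1, 0) (1, 0) - Ql (1, 0) (0, 0))
    (ht₂ : t = Ql (1, 1) (1, 1) - Ql (1, 1) (0, 1)) :
    ∀ (N : ℕ) (s z : ℂ),
      (z • (1 : Matrix (Conf (N + 1)) (Conf (N + 1)) ℂ) - s • Qg Ql (N + 1)).det =
        ∏ k ∈ Finset.range (N + 1), (z - s * t ^ k) ^ (2 * Nat.choose N k) := by
  intro N
  induction N with
  | zero =>
    intro s z
    have h1 : Qg Ql 1 = (1 : Matrix (Conf 1) (Conf 1) ℂ) := by rw [Qg]
    rw [h1, ← sub_smul, Matrix.det_smul, Matrix.det_one, mul_one]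
    have hcard : Fintype.card (Conf 1) = 2 := by simp
    rw [hcard]
    simp
  | succ N ih =>
    intro s z
    set Q := Qg Ql (N + 1) with hQ
    set Δ : Fin 2 → Fin 2 → Matrix (Conf (N + 1)) (Conf (N + 1)) ℂ :=
      fun k i => Matrix.diagonal (fun zc => Ql (k, zc 0) (i, zc 0)) with hΔ
    have h2 : ∀ v : Fin 2, v = 0 ∨ v = 1 := by decide
    -- block decomposition of Qg (N+2)
    have hQg : Qg Ql (N + 2) =
        (Matrix.fromBlocks (Q * Δ 0 0) (Q * Δ 0 1) (Q * Δ 1 0) (Q * Δ 1 1)).submatrix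
          (splitEquiv (N + 1)) (splitEquiv (N + 1)) := by
      ext x y
      rw [Matrix.submatrix_apply, Qg_apply Ql hvan]
      rcases h2 (x 0) with hx | hx <;> rcases h2 (y 0) with hy | hy <;>
        simp only [hx, hy, splitEquiv_apply_zero, splitEquiv_apply_one,
          Matrix.fromBlocks_apply₁₁, Matrix.fromBlocks_apply₁₂,
          Matrix.fromBlocks_apply₂₁, Matrix.fromBlocks_apply₂₂, hΔ,
          Matrix.mul_diagonal] <;> ring
    -- move the determinant through the reindexing
    have hsub : z • (1 : Matrix (Conf (N + 2)) (Conf (N + 2)) ℂ) - s • Qg Ql (N + 2) =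
        (z • (1 : Matrix (Conf (N+1) ⊕ Conf (N+1)) (Conf (N+1) ⊕ Conf (N+1)) ℂ) -
          s • Matrix.fromBlocks (Q * Δ 0 0) (Q * Δ 0 1) (Q * Δ 1 0) (Q * Δ 1 1)).submatrix
          (splitEquiv (N + 1)) (splitEquiv (N + 1)) := by
      rw [hQg]
      ext x y
      simp [Matrix.submatrix_apply, Matrix.sub_apply, Matrix.smul_apply, Matrix.one_apply,
        (splitEquiv (N + 1)).injective.eq_iff]
    rw [hsub, Matrix.det_submatrix_equiv_self]
    -- identify the block entries
    set A := z • (1 : Matrix (Conf (N+1)) (Conf (N+1)) ℂ) - s • (Q * Δ 0 0) with hA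
    set B := -(s • (Q * Δ 0 1)) with hB
    set C := -(s • (Q * Δ 1 0)) with hC
    set D := z • (1 : Matrix (Conf (N+1)) (Conf (N+1)) ℂ) - s • (Q * Δ 1 1) with hD
    have hblocks : z • (1 : Matrix (Conf (N+1) ⊕ Conf (N+1)) (Conf (N+1) ⊕ Conf (N+1)) ℂ) -
        s • Matrix.fromBlocks (Q * Δ 0 0) (Q * Δ 0 1) (Q * Δ 1 0) (Q * Δ 1 1) =
        Matrix.fromBlocks A B C D := by
      rw [← Matrix.fromBlocks_one, Matrix.fromBlocks_smul, Matrix.fromBlocks_smul,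
        fromBlocks_sub, hA, hB, hC, hD]
      congr 1 <;> simp
    rw [hblocks]
    -- diagonal identities
    have hΔa : Δ 0 0 + Δ 1 0 = 1 := by
      simp only [hΔ]
      rw [Matrix.diagonal_add, ← Matrix.diagonal_one]
      exact congrArg Matrix.diagonal (funext fun zc => hstoch 0 (zc 0))
    have hΔb : Δ 0 1 + Δ 1 1 = 1 := by
      simp only [hΔ]
      rw [Matrix.diagonal_add, ← Matrix.diagonal_one]
      exact congrArg Matrix.diagonal (funext fun zc => hstoch 1 (zc 0))
    have hΔt : Q * (Δ 0 0 - Δ 0 1) = t • Q := by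
      simp only [hΔ]
      rw [Matrix.diagonal_sub]
      ext i j
      rw [Matrix.mul_diagonal, Matrix.smul_apply, smul_eq_mul]
      have hj : Ql (0, j 0) (0, j 0) - Ql (0, j 0) (1, j 0) = t := by
        rcases h2 (j 0) with h | h <;> rw [h] <;>
          [(have e0 := hstoch 0 0; have e1 := hstoch 1 0; rw [ht₁]);
           (have e0 := hstoch 0 1; have e1 := hstoch 1 1; rw [ht₂])] <;> linear_combination e0 - e1
      rw [hj]; ring
    -- elementary block operations
    have hL : (Matrix.fromBlocks (1 : Matrix (Conf (N+1)) (Conf (N+1)) ℂ) 0 1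
        (1 : Matrix (Conf (N+1)) (Conf (N+1)) ℂ)).det = 1 := by
      rw [Matrix.det_fromBlocks_zero₁₂]; simp
    have hR : (Matrix.fromBlocks (1 : Matrix (Conf (N+1)) (Conf (N+1)) ℂ) 0 (-1)
        (1 : Matrix (Conf (N+1)) (Conf (N+1)) ℂ)).det = 1 := by
      rw [Matrix.det_fromBlocks_zero₁₂]; simp
    have hmul : Matrix.fromBlocks (1 : Matrix (Conf (N+1)) (Conf (N+1)) ℂ) 0 1
        (1 : Matrix (Conf (N+1)) (Conf (N+1)) ℂ) *
        Matrix.fromBlocks A B C D *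
        Matrix.fromBlocks (1 : Matrix (Conf (N+1)) (Conf (N+1)) ℂ) 0 (-1)
        (1 : Matrix (Conf (N+1)) (Conf (N+1)) ℂ) =
        Matrix.fromBlocks (A - B) B (A + C - (B + D)) (B + D) := by
      rw [Matrix.fromBlocks_multiply, Matrix.fromBlocks_multiply]
      congr 1 <;> simp [Matrix.mul_neg, sub_eq_add_neg] <;> abel
    have hdet : (Matrix.fromBlocks A B C D).det =
        (Matrix.fromBlocks (A - B) B (A + C - (B + D)) (B + D)).det := by
      rw [← hmul, Matrix.det_mul, Matrix.det_mul, hL, hR, one_mul, mul_one]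
    -- compute the resulting blocks
    have hAB : A - B = z • (1 : Matrix (Conf (N+1)) (Conf (N+1)) ℂ) - (s * t) • Q := by
      rw [hA, hB, sub_neg_eq_add, sub_add, ← smul_sub, ← Matrix.mul_sub, hΔt, smul_smul]
    have hBD : B + D = z • (1 : Matrix (Conf (N+1)) (Conf (N+1)) ℂ) - s • Q := by
      have h1 : Q * Δ 0 1 + Q * Δ 1 1 = Q := by rw [← Matrix.mul_add, hΔb, Matrix.mul_one]
      rw [hB, hD, show -(s • (Q * Δ 0 1)) + (z • (1 : Matrix (Conf (N+1)) (Conf (N+1)) ℂ) -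
        s • (Q * Δ 1 1)) = z • (1 : Matrix (Conf (N+1)) (Conf (N+1)) ℂ) -
        s • (Q * Δ 0 1 + Q * Δ 1 1) from by rw [smul_add]; abel, h1]
    have hAC : A + C - (B + D) = 0 := by
      have h1 : Q * Δ 0 0 + Q * Δ 1 0 = Q := by rw [← Matrix.mul_add, hΔa, Matrix.mul_one]
      have h2' : A + C = z • (1 : Matrix (Conf (N+1)) (Conf (N+1)) ℂ) - s • Q := by
        rw [hA, hC, show z • (1 : Matrix (Conf (N+1)) (Conf (N+1)) ℂ) - s • (Q * Δ 0 0) +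
          -(s • (Q * Δ 1 0)) = z • (1 : Matrix (Conf (N+1)) (Conf (N+1)) ℂ) -
          s • (Q * Δ 0 0 + Q * Δ 1 0) from by rw [smul_add]; abel, h1]
      rw [h2', hBD, sub_self]
    rw [hdet, hAC, hAB, hBD, Matrix.det_fromBlocks_zero₂₁, ih (s * t) z, ih s z,
      pascal_prod (fun k => z - s * t ^ k) N]
    exact congrArg₂ (· * ·) (Finset.prod_congr rfl fun k _ => by ring_nf) rfl


/-- if `t = a₁₀¹⁰ − a₁₀⁰⁰ = a₁₁¹¹ − a₁₁⁰¹`, the characteristic polynomial of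
`Q_N^{(g)}` is `∏_{k=0}^{N-1} (λ − t^k)^{2·C(N-1,k)}`. -/
theorem stmt8 (Ql : Matrix (Fin 2 × Fin 2) (Fin 2 × Fin 2) ℂ) (hvan : ∀ i j k l : Fin 2, j ≠ l → Ql (k, l) (i, j) = 0) (hstoch : ∀ i j : Fin 2, Ql (0, j) (i, j) + Ql (1, j) (i, j) = 1) (t : ℂ)
    (ht₁ : t = Ql (1, 0) (1, 0) - Ql (1, 0) (0, 0))
    (ht₂ : t = Ql (1, 1) (1, 1) - Ql (1, 1) (0, 1)) (N : ℕ) (z : ℂ) :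
    (z • (1 : Matrix (Conf (N + 1)) (Conf (N + 1)) ℂ) - Qg Ql (N + 1)).det =
      ∏ k ∈ Finset.range (N + 1), (z - t ^ k) ^ (2 * Nat.choose N k) := by
  have h := aux_det Ql hvan hstoch t ht₁ ht₂ N 1 z
  rw [one_smul] at h
  rw [h]
  exact Finset.prod_congr rfl fun k _ => by rw [one_mul]
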